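/- arXiv:2007.01897 — 2 statements merged into one kernel-verified Lean document; each statement's English description precedes it below -/
import Mathlib

section
/- Let G_s = (V, E_s) be a strongly connected directed graph, let u, w ∈ V with u ≠ w, and suppose (u,w) ∉ E_s. Then in the directed graph (V, E_s ∪ {(u,w)}) the vertices u and w lie in a common strongly biconnected component; that is, there is a vertex subset U ⊆ V with u, w ∈ U such that the induced subgraph of (V, E_s ∪ {(u,w)}) on U is strongly biconnected. -/
/-- A directed graph (on vertex type `V`, with edge relation `E`) is strongly connected if
every vertex can reach every other vertex by a directed path. -/
def StronglyConnected {V : Type*} (E : V → V → Prop) : Prop :=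
  ∀ u v : V, Relation.ReflTransGen E u v

/-- The underlying simple undirected graph of a directed graph: `u` and `v` are adjacent
iff `u ≠ v` and there is a directed edge between them in some direction. -/
def underlyingGraph {V : Type*} (E : V → V → Prop) : SimpleGraph V where
  Adj u v := u ≠ v ∧ (E u v ∨ E v u)
  symm := ⟨fun u v ⟨h1, h2⟩ => ⟨h1.symm, h2.symm⟩⟩
  loopless := ⟨fun _ h => h.1 rfl⟩

/-- `w` is an articulation point of the undirected graph `G` if removing `w`
disconnects the graph. -/
def IsArticulationPoint {V : Type*} (G : SimpleGraph V) (w : V) : Prop :=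
  ¬ (G.induce {v : V | v ≠ w}).Preconnected

/-- An undirected graph is biconnected if it is connected and has no articulation point. -/
def Biconnected {V : Type*} (G : SimpleGraph V) : Prop :=
  G.Connected ∧ ∀ w : V, ¬ IsArticulationPoint G w

/-- A directed graph is strongly biconnected if it is strongly connected and its
underlying undirected graph is biconnected. -/
def StronglyBiconnected {V : Type*} (E : V → V → Prop) : Prop :=
  StronglyConnected E ∧ Biconnected (underlyingGraph E)

lemma exists_nodup_chain {V : Type*} {r : V → V → Prop} {a b : V}
    (h : Relation.ReflTransGen r a b) :
    ∃ l : List V, List.Chain r a l ∧ (a :: l).getLast (by simp) = b ∧ (a :: l).Nodup := by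
  induction h using Relation.ReflTransGen.head_induction_on with
  | refl => exact ⟨[], List.Chain.nil, rfl, List.nodup_singleton _⟩
  | head hac hcb ih =>
    obtain ⟨l, hchain, hlast, hnodup⟩ := ih
    rename_i a c
    by_cases hmem : a ∈ c :: l
    · obtain ⟨s, t, hst⟩ := List.append_of_mem hmem
      have hsuf : (a :: t) <:+ (c :: l) := ⟨s, hst.symm⟩
      have h1 : List.Chain' r (c :: l) := hchain
      refine ⟨t, h1.suffix hsuf, ?_, hnodup.sublist hsuf.sublist⟩
      rw [← hlast]
      simp only [hst]
      exact (List.getLast_append_of_right_ne_nil _ _ (by simp)).symm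
    · exact ⟨c :: l, List.Chain.cons hac hchain,
        by rw [List.getLast_cons (by simp)]; exact hlast,
        List.nodup_cons.mpr ⟨hmem, hnodup⟩⟩

/-- If $G_s = (V, E_s)$ is strongly connected, $u ≠ w$ and $(u,w) ∉ E_s$, then
in the graph $(V, E_s ∪ \{(u,w)\})$ the vertices $u$ and $w$ lie in a common vertex set $U$
whose induced directed subgraph is strongly biconnected. -/
theorem endpoints_of_added_edge_in_common_sbc {V : Type*} [Fintype V]
    (Es : V → V → Prop) (hsc : StronglyConnected Es)
    (u w : V) (huw : u ≠ w) (hne : ¬ Es u w) :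
    ∃ U : Set V, u ∈ U ∧ w ∈ U ∧
      StronglyBiconnected
        (fun a b : U => Es a.1 b.1 ∨ ((a : V), (b : V)) = (u, w)) := by
  obtain ⟨l, hchain, hlast, hnodup⟩ := exists_nodup_chain (hsc w u)
  set c : List V := w :: l with hc
  set n : ℕ := c.length with hn
  have hnpos : 0 < n := by simp [hn, hc]
  have hn2 : 2 ≤ n := by
    rcases l with _ | ⟨x, l'⟩
    · exact absurd hlast.symm huw
    · simp [hn, hc]
  set U : Set V := {x | x ∈ c} with hU
  have hwU : w ∈ U := by simp [hU, hc]
  have huU : u ∈ U := by rw [hU]; exact hlast ▸ List.getLast_mem _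
  set E' : U → U → Prop := fun a b => Es a.1 b.1 ∨ ((a : V), (b : V)) = (u, w) with hE'
  -- indexed elements
  have hmodlt : ∀ i : ℕ, i % n < n := fun i => Nat.mod_lt _ hnpos
  set elemm : ℕ → U := fun i => ⟨c.get ⟨i % n, hmodlt i⟩, List.get_mem c _⟩ with helemm
  have hget0 : c.get ⟨0, by omega⟩ = w := rfl
  have hgetlast : c.get ⟨n - 1, by omega⟩ = u := by
    rw [← hlast, List.getLast_eq_getElem]; rfl
  have hedge : ∀ (i : ℕ) (h : i < n - 1),
      Es (c.get ⟨i, by omega⟩) (c.get ⟨i + 1, by omega⟩) :=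
    fun i h => List.isChain_iff_getElem.mp (hchain : List.Chain' Es c) i (by simp only [hn, hc] at h ⊢; omega)
  -- elemm only depends on index mod n
  have hmodeq : ∀ i j : ℕ, i % n = j % n → elemm i = elemm j := by
    intro i j h
    apply Subtype.ext
    simp only [helemm]
    congr 1
    exact Fin.ext h
  -- the cycle step
  have hstep : ∀ i : ℕ, E' (elemm i) (elemm (i + 1)) := by
    intro i
    have h1 : (i + 1) % n = (i % n + 1) % n := (Nat.mod_add_mod i n 1).symm
    by_cases hc1 : i % n = n - 1
    · have h2 : (i + 1) % n = 0 := by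
        rw [h1, hc1, Nat.sub_add_cancel (by omega), Nat.mod_self]
      refine Or.inr ?_
      have e1 : (elemm i : V) = u := by
        simp only [helemm]; rw [show (⟨i % n, hmodlt i⟩ : Fin n) = ⟨n - 1, by omega⟩ from Fin.ext hc1]
        exact hgetlast
      have e2 : (elemm (i + 1) : V) = w := by
        simp only [helemm]
        rw [show (⟨(i + 1) % n, hmodlt _⟩ : Fin n) = ⟨0, by omega⟩ from Fin.ext h2]
        exact hget0
      rw [e1, e2]
    · have hlt : i % n < n - 1 := by have := hmodlt i; omega
      have h2 : (i + 1) % n = i % n + 1 := by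
        rw [h1, Nat.mod_eq_of_lt (by omega)]
      refine Or.inl ?_
      have := hedge (i % n) hlt
      simp only [helemm]
      rw [show (⟨(i + 1) % n, hmodlt _⟩ : Fin n) = ⟨i % n + 1, by omega⟩ from Fin.ext h2]
      exact this
  -- forward reachability
  have hforward : ∀ (d i : ℕ), Relation.ReflTransGen E' (elemm i) (elemm (i + d)) := by
    intro d
    induction d with
    | zero => intro i; exact Relation.ReflTransGen.refl
    | succ d ih => intro i; exact (ih i).tail (hstep (i + d))
  have hreach : ∀ i j : ℕ, Relation.ReflTransGen E' (elemm i) (elemm j) := by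
    intro i j
    have key : elemm (i + ((n - i % n) + j % n)) = elemm j := by
      apply hmodeq
      obtain ⟨q, r, hr, hqr⟩ : ∃ q r, r = i % n ∧ i = n * q + r :=
        ⟨i / n, i % n, rfl, (Nat.div_add_mod i n).symm⟩
      have hrlt : r < n := hr ▸ hmodlt i
      have h5 : i + ((n - i % n) + j % n) = n * q + n + j % n := by
        rw [← hr]; omega
      have h6 : n * q + n + j % n = n * (q + 1) + j % n := by ring
      rw [h5, h6, Nat.mul_add_mod]
      exact Nat.mod_mod_of_dvd _ dvd_rfl
    exact key ▸ hforward _ i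
  -- every element of U is some elemm
  have hrepU : ∀ a : U, ∃ i : ℕ, i < n ∧ elemm i = a := by
    intro a
    obtain ⟨i, hi⟩ := List.get_of_mem a.2
    refine ⟨i.1, i.2, Subtype.ext ?_⟩
    simp only [helemm]
    rw [show (⟨i.1 % n, hmodlt _⟩ : Fin n) = i from Fin.ext (Nat.mod_eq_of_lt i.2)]
    exact hi
  have hSC : StronglyConnected E' := by
    intro a b
    obtain ⟨i, _, ha⟩ := hrepU a
    obtain ⟨j, _, hb⟩ := hrepU b
    rw [← ha, ← hb]; exact hreach i j
  -- reachability in underlying graph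
  have hrtg_reach : ∀ a b : U, Relation.ReflTransGen E' a b →
      (underlyingGraph E').Reachable a b := by
    intro a b h
    induction h with
    | refl => exact SimpleGraph.Reachable.refl _
    | @tail p q h1 h2 ih =>
      by_cases hpq : p = q
      · exact hpq ▸ ih
      · exact ih.trans (SimpleGraph.Adj.reachable ⟨hpq, Or.inl h2⟩)
  have hNE : Nonempty U := ⟨⟨w, hwU⟩⟩
  have hconn : (underlyingGraph E').Connected :=
    SimpleGraph.Connected.mk (fun a b => hrtg_reach a b (hSC a b))
  refine ⟨U, huU, hwU, hSC, hconn, ?_⟩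
  -- no articulation points
  intro x
  rw [IsArticulationPoint, not_not]
  obtain ⟨kf, hkf⟩ := List.get_of_mem x.2
  set k : ℕ := kf.1 with hk
  have hkn : k < n := kf.2
  -- index uniqueness
  have hinj : ∀ i j : Fin n, c.get i = c.get j → i = j := fun i j h =>
    (hnodup.get_inj_iff).mp h
  have hxval : (x : V) = c.get ⟨k, hkn⟩ := by rw [← hkf]
  have hneqx : ∀ m : ℕ, m % n ≠ k → elemm m ≠ x := by
    intro m hm heq
    apply hm
    have : c.get ⟨m % n, hmodlt m⟩ = c.get ⟨k, hkn⟩ := by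
      rw [← hxval]; exact congrArg Subtype.val heq
    exact Fin.val_eq_of_eq (hinj _ _ this)
  have hne_k : ∀ t : ℕ, t ≤ n - 2 → (k + 1 + t) % n ≠ k := by
    intro t ht heq
    have h1 : (k + (1 + t)) % n = k % n := by
      rw [show k + (1 + t) = k + 1 + t from by ring, heq, Nat.mod_eq_of_lt hkn]
    have h2 : k ≡ k + (1 + t) [MOD n] := (Nat.ModEq.symm h1)
    have h3 : n ∣ (k + (1 + t) - k) := (Nat.modEq_iff_dvd' (by omega)).mp h2
    have h4 : n ∣ 1 + t := by simpa using h3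
    have := Nat.le_of_dvd (by omega) h4
    omega
  -- distinctness of consecutive elements
  have hconsec : ∀ m : ℕ, elemm m ≠ elemm (m + 1) := by
    intro m heq
    have h1 : (m + 1) % n = (m % n + 1) % n := (Nat.mod_add_mod m n 1).symm
    have hf : (⟨m % n, hmodlt m⟩ : Fin n) = ⟨(m + 1) % n, hmodlt _⟩ :=
      hinj _ _ (congrArg Subtype.val heq)
    have h2 : m % n = (m + 1) % n := congrArg Fin.val hf
    by_cases hc1 : m % n = n - 1
    · have h3 : (m % n + 1) % n = 0 := by
        rw [hc1, Nat.sub_add_cancel (by omega), Nat.mod_self]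
      omega
    · have h4 : m % n < n := hmodlt m
      have h3 : (m % n + 1) % n = m % n + 1 := Nat.mod_eq_of_lt (by omega)
      omega
  have hstepadj : ∀ m : ℕ, (underlyingGraph E').Adj (elemm m) (elemm (m + 1)) :=
    fun m => ⟨hconsec m, Or.inl (hstep m)⟩
  -- the induced graph
  set Gi := (underlyingGraph E').induce {v : U | v ≠ x} with hGi
  have hp0k : (k + 1 + 0) % n ≠ k := hne_k 0 (by omega)
  set p0 : {v : U | v ≠ x} := ⟨elemm (k + 1), hneqx _ (by simpa using hp0k)⟩ with hp0
  have hmain : ∀ t : ℕ, t ≤ n - 2 → ∀ p : {v : U | v ≠ x},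
      (p : U) = elemm (k + 1 + t) → Gi.Reachable p0 p := by
    intro t
    induction t with
    | zero =>
      intro _ p hp
      have : p = p0 := Subtype.ext (by rw [hp, hp0])
      rw [this]
    | succ t ih =>
      intro ht p hp
      have hq : (k + 1 + t) % n ≠ k := hne_k t (by omega)
      set q : {v : U | v ≠ x} := ⟨elemm (k + 1 + t), hneqx _ hq⟩ with hqdef
      have hr1 : Gi.Reachable p0 q := ih (by omega) q rfl
      have hadj : Gi.Adj q p := by
        show (underlyingGraph E').Adj (q : U) (p : U)
        rw [hp]
        exact hstepadj (k + 1 + t)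
      exact hr1.trans hadj.reachable
  have hrepV : ∀ p : {v : U | v ≠ x}, ∃ t : ℕ, t ≤ n - 2 ∧ (p : U) = elemm (k + 1 + t) := by
    intro p
    obtain ⟨j, hjn, hj⟩ := hrepU (p : U)
    have hjk : j ≠ k := by
      intro heq
      apply p.2
      apply Subtype.ext
      rw [← hj, hxval]
      show (c.get ⟨j % n, hmodlt j⟩ : V) = c.get ⟨k, hkn⟩
      have hf : (⟨j % n, hmodlt j⟩ : Fin n) = ⟨k, hkn⟩ :=
        Fin.ext (show j % n = k by rw [Nat.mod_eq_of_lt hjn]; exact heq)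
      exact congrArg c.get hf
    by_cases hcase : k + 1 ≤ j
    · refine ⟨j - k - 1, by omega, ?_⟩
      rw [← hj]
      exact (hmodeq _ _ (by congr 1; omega)).symm
    · refine ⟨n + j - k - 1, by omega, ?_⟩
      rw [← hj]
      refine (hmodeq _ _ ?_).symm
      have h7 : k + 1 + (n + j - k - 1) = n + j := by omega
      rw [h7, Nat.add_mod_left]
  intro p q
  obtain ⟨t1, ht1, hp⟩ := hrepV p
  obtain ⟨t2, ht2, hq⟩ := hrepV q
  exact (hmain t1 ht1 p hp).symm.trans (hmain t2 ht2 q hq)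
end

section
/- There exists a strongly biconnected directed graph G = (V,E) and an edge e ∈ E such that e is a b-bridge of G but not a strong bridge of G; that is, the subgraph (V, E∖{e}) is strongly connected but not strongly biconnected. -/
def myE (a b : Fin 5) : Prop :=
  (a, b) ∈ [((0:Fin 5),(1:Fin 5)), (1,2), (2,0), (2,3), (3,4), (4,2), (1,3)]

instance : DecidableRel myE := fun a b => by unfold myE; infer_instance

def myE' (a b : Fin 5) : Prop := myE a b ∧ (a, b) ≠ ((1:Fin 5), (3:Fin 5))

instance : DecidableRel myE' := fun a b => by unfold myE'; infer_instance

instance udec {V : Type*} [DecidableEq V] (E : V → V → Prop) [DecidableRel E] :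
    DecidableRel (underlyingGraph E).Adj := fun a b => by
  show Decidable (a ≠ b ∧ (E a b ∨ E b a)); infer_instance

lemma myE'_sc : StronglyConnected myE' := by
  have to2 : ∀ u : Fin 5, Relation.ReflTransGen myE' u 2 := by
    intro u
    fin_cases u
    · exact (Relation.ReflTransGen.single (by decide : myE' 0 1)).tail (by decide : myE' 1 2)
    · exact Relation.ReflTransGen.single (by decide)
    · exact Relation.ReflTransGen.refl
    · exact (Relation.ReflTransGen.single (by decide : myE' 3 4)).tail (by decide : myE' 4 2)
    · exact Relation.ReflTransGen.single (by decide)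
  have from2 : ∀ v : Fin 5, Relation.ReflTransGen myE' 2 v := by
    intro v
    fin_cases v
    · exact Relation.ReflTransGen.single (by decide)
    · exact (Relation.ReflTransGen.single (by decide : myE' 2 0)).tail (by decide : myE' 0 1)
    · exact Relation.ReflTransGen.refl
    · exact Relation.ReflTransGen.single (by decide)
    · exact (Relation.ReflTransGen.single (by decide : myE' 2 3)).tail (by decide : myE' 3 4)
  exact fun u v => (to2 u).trans (from2 v)

/-- There is a strongly biconnected directed graph with an edge that is a
b-bridge but not a strong bridge: its removal leaves the graph strongly connected but
not strongly biconnected. -/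
theorem exists_b_bridge_not_strong_bridge :
    ∃ (V : Type) (_ : Fintype V) (E : V → V → Prop) (e : V × V),
      E e.1 e.2 ∧ StronglyBiconnected E ∧
      StronglyConnected (fun a b => E a b ∧ (a, b) ≠ e) ∧
      ¬ StronglyBiconnected (fun a b => E a b ∧ (a, b) ≠ e) := by
  refine ⟨Fin 5, inferInstance, myE, (1, 3), by decide, ?_, ?_, ?_⟩
  · constructor
    · exact fun u v => Relation.ReflTransGen.mono (r := myE') (p := myE) (fun a b h => h.1) u v (myE'_sc u v)
    · constructor
      · exact ⟨by unfold SimpleGraph.Preconnected; decide +kernel⟩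
      · intro w hw
        apply hw
        fin_cases w <;> (unfold SimpleGraph.Preconnected; decide +kernel)
  · exact myE'_sc
  · rintro ⟨-, -, hap⟩
    exact hap 2 (by show ¬ _; unfold SimpleGraph.Preconnected; decide +kernel)
end
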